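/- Consider the exceptional-dynamics differential equation 2 w u′(w) + u(w) − u(w)⁵ = 0 for a function u = L_w (the derivative of a Lagrangian L with respect to the kinetic invariant w). Then: (a) for every real λ, the function u(w) = (1 − λw²)^{−1/4} satisfies this equation on any interval of w where λw² < 1; and (b) conversely, if I ⊆ (0, ∞) is an interval and u : I → ℝ is C¹, strictly positive, and satisfies 2 w u′ + u − u⁵ = 0 on I, then there exists a real constant λ such that u(w) = (1 − λw²)^{−1/4} for all w ∈ I. -/

import Mathlib

noncomputable section

/-- the exceptional-dynamics ODE 2w u′ + u − u⁵ = 0.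
(a) u = (1 − λw²)^{-1/4} is a solution wherever λw² < 1;
(b) every positive C¹ solution on an interval I ⊆ (0,∞) has this form. -/
theorem exceptional_dynamics_ode :
    -- (a)
    (∀ lam : ℝ, ∀ w : ℝ, lam * w ^ 2 < 1 →
      2 * w * deriv (fun t : ℝ => (1 - lam * t ^ 2) ^ (-(1 / 4) : ℝ)) w
        + (1 - lam * w ^ 2) ^ (-(1 / 4) : ℝ)
        - ((1 - lam * w ^ 2) ^ (-(1 / 4) : ℝ)) ^ 5 = 0) ∧
    -- (b)
    (∀ I : Set ℝ, I.OrdConnected → I ⊆ Set.Ioi 0 →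
      ∀ u : ℝ → ℝ, ContDiffOn ℝ 1 u I →
      (∀ w ∈ I, 0 < u w) →
      (∀ w ∈ I, 2 * w * derivWithin u I w + u w - (u w) ^ 5 = 0) →
      ∃ lam : ℝ, ∀ w ∈ I, u w = (1 - lam * w ^ 2) ^ (-(1 / 4) : ℝ)) := by
  constructor
  · -- Part (a)
    intro lam w hw
    have hX : (0:ℝ) < 1 - lam * w ^ 2 := by linarith
    have hb : HasDerivAt (fun t : ℝ => 1 - lam * t ^ 2) (-(lam * (2 * w))) w := by
      have h := ((hasDerivAt_pow 2 w).const_mul lam).const_sub 1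
      simpa using h
    have hd : HasDerivAt (fun t : ℝ => (1 - lam * t ^ 2) ^ (-(1 / 4) : ℝ))
        ((-(lam * (2 * w))) * (-(1 / 4)) * (1 - lam * w ^ 2) ^ ((-(1 / 4) : ℝ) - 1)) w :=
      hb.rpow_const (Or.inl hX.ne')
    rw [hd.deriv]
    have h1 : ((1 - lam * w ^ 2) ^ (-(1 / 4) : ℝ)) ^ 5
        = (1 - lam * w ^ 2) ^ ((-(1 / 4) : ℝ) - 1) := by
      rw [← Real.rpow_natCast ((1 - lam * w ^ 2) ^ (-(1 / 4) : ℝ)) 5,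
        ← Real.rpow_mul hX.le]
      norm_num
    have h2 : (1 - lam * w ^ 2) ^ (-(1 / 4) : ℝ)
        = (1 - lam * w ^ 2) * (1 - lam * w ^ 2) ^ ((-(1 / 4) : ℝ) - 1) := by
      have h := Real.rpow_add hX 1 ((-(1 / 4) : ℝ) - 1)
      rw [Real.rpow_one] at h
      rw [← h]
      norm_num
    rw [h1, h2]
    ring
  · -- Part (b)
    intro I hIoc hI0 u hu hupos hode
    rcases Set.eq_empty_or_nonempty I with rfl | ⟨w₀, hw₀⟩
    · exact ⟨0, by simp⟩
    have hconv : Convex ℝ I := hIoc.convex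
    set g : ℝ → ℝ := fun w => (1 - ((u w) ^ 4)⁻¹) / w ^ 2 with hgdef
    have key : ∀ w ∈ I, HasDerivWithinAt g 0 I w := by
      intro w hw
      have hwpos : (0:ℝ) < w := hI0 hw
      have hupw : 0 < u w := hupos w hw
      have hdu : HasDerivWithinAt u (derivWithin u I w) I w :=
        ((hu.differentiableOn one_ne_zero) w hw).hasDerivWithinAt
      have hODE := hode w hw
      set u' := derivWithin u I w with hu'def
      -- derivative of numerator
      have hA : HasDerivWithinAt (fun t => 1 - ((u t) ^ 4)⁻¹)
          (-(-((↑(4:ℕ) * u w ^ (4 - 1) * u')) / (u w ^ 4) ^ 2)) I w := by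
        exact ((hdu.pow 4).inv (pow_ne_zero 4 hupw.ne')).const_sub 1
      have hB : HasDerivWithinAt (fun t : ℝ => ((t : ℝ) ^ 2)⁻¹)
          (-(↑(2:ℕ) * w ^ (2 - 1) * 1) / (w ^ 2) ^ 2) I w := by
        exact ((hasDerivWithinAt_id w I).pow 2).inv (pow_ne_zero 2 hwpos.ne')
      have hmul : HasDerivWithinAt (fun t => (1 - ((u t) ^ 4)⁻¹) * ((t ^ 2)⁻¹)) _ I w := hA.mul hB
      have heq : g = fun t => (1 - ((u t) ^ 4)⁻¹) * ((t ^ 2)⁻¹) := by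
        funext t; simp [hgdef, div_eq_mul_inv]
      rw [heq]
      convert hmul using 1
      have hu5 : u w ^ 5 = u w + 2 * w * u' := by linarith
      field_simp
      linear_combination (-(2:ℝ) * u w ^ 3 * w) * hODE
    have hconst : ∀ w ∈ I, g w = g w₀ := by
      intro w hw
      have h := hconv.norm_image_sub_le_of_norm_hasDerivWithin_le
        (f' := fun _ => (0:ℝ)) (C := 0) key (fun x _ => by simp) hw₀ hw
      simp only [Real.norm_eq_abs] at h
      have : |g w - g w₀| ≤ 0 := by simpa using h
      have := abs_nonpos_iff.mp this
      linarith [sub_eq_zero.mp this]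
    refine ⟨g w₀, fun w hw => ?_⟩
    have hwpos : (0:ℝ) < w := hI0 hw
    have hupw : 0 < u w := hupos w hw
    have hval : 1 - g w₀ * w ^ 2 = ((u w) ^ 4)⁻¹ := by
      rw [← hconst w hw, hgdef]
      field_simp
      ring
    rw [hval]
    have h4 : ((u w) ^ 4)⁻¹ = (u w) ^ (-(4:ℝ)) := by
      rw [← Real.rpow_natCast (u w) 4, ← Real.rpow_neg hupw.le]
      norm_num
    rw [h4, ← Real.rpow_mul hupw.le]
    norm_num
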